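/- The four-dimensional algebra C with basis e1, e2, e3, e4 and nonzero products e1e1 = e2, e4e4 = e2, e1e2 = e3 satisfies (aa)a = 0 and (aa)(aa) = 0 for all a (hence is unary Leibniz), but does not satisfy ⟨a,b,a⟩ = 0 since ⟨e1+e4, e4, e1+e4⟩ = -e3 ≠ 0. -/

import Mathlib

/-- Multiplication of the 4-dimensional algebra C with e1e1 = e2, e4e4 = e2,
e1e2 = e3 (extended bilinearly); basis vectors are indexed 0,1,2,3. -/
def mulC {K : Type*} [Field K] (v w : Fin 4 → K) : Fin 4 → K :=
  ![0, v 0 * w 0 + v 3 * w 3, v 0 * w 1, 0]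

/-- The Leibniz discriminant ⟨a,b,c⟩ with respect to mulC. -/
def ltC {K : Type*} [Field K] (a b c : Fin 4 → K) : Fin 4 → K :=
  mulC (mulC a b) c - mulC a (mulC b c) + mulC b (mulC a c)

theorem stmt_13 {K : Type*} [Field K] (h2 : (2 : K) ≠ 0) :
    (∀ a : Fin 4 → K, mulC (mulC a a) a = 0 ∧ mulC (mulC a a) (mulC a a) = 0) ∧
    ltC (Pi.single 0 1 + Pi.single 3 1) (Pi.single 3 1) (Pi.single 0 1 + Pi.single 3 1) =
      -(Pi.single 2 1 : Fin 4 → K) ∧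
    ltC (Pi.single 0 1 + Pi.single 3 1) (Pi.single 3 1) (Pi.single 0 1 + Pi.single 3 1) ≠
      (0 : Fin 4 → K) := by
  have heq : ltC (Pi.single 0 1 + Pi.single 3 1) (Pi.single 3 1)
      (Pi.single 0 1 + Pi.single 3 1) = -(Pi.single 2 1 : Fin 4 → K) := by
    funext i
    fin_cases i <;>
      norm_num [ltC, mulC, Pi.single_apply, Fin.ext_iff, Fin.val_zero, Fin.val_one, Fin.val_two, show ((3:Fin 4)).val = 3 from rfl, show ((2:Fin 4)).val = 2 from rfl, Matrix.cons_val_three]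
  refine ⟨fun a => ⟨?_, ?_⟩, heq, ?_⟩
  · funext i; fin_cases i <;> simp [mulC] <;> ring
  · funext i; fin_cases i <;> simp [mulC] <;> ring
  · rw [heq]
    intro h
    have := congrFun h 2
    simp [Pi.single_apply] at this
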